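/- Let M and S be completely specified deterministic prime FSMs over the same input and output alphabets, with output functions ω_M and ω_S. Define the composite requirement R_eq as the conjunction over all (q,x) ∈ Q × Σ_I of the elementary requirements R(q, x, {ω_M(q,x)}). Then L(S) = L(M) if and only if S ⊨ R_eq. -/
import Mathlib


def dAfter {Q I : Type*} (δ : Q → I → Q) : Q → List I → Q
  | q, [] => q
  | q, x :: xs => dAfter δ (δ q x) xs

def oOut {Q I O : Type*} (δ : Q → I → Q) (ω : Q → I → O) : Q → List I → List O
  | _, [] => []
  | q, x :: xs => ω q x :: oOut δ ω (δ q x) xs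

lemma dAfter_append {Q I : Type*} (δ : Q → I → Q) (q : Q) (xs ys : List I) :
    dAfter δ q (xs ++ ys) = dAfter δ (dAfter δ q xs) ys := by
  induction xs generalizing q with
  | nil => rfl
  | cons x xs ih => simp [dAfter, ih]

lemma oOut_append {Q I O : Type*} (δ : Q → I → Q) (ω : Q → I → O) (q : Q) (xs ys : List I) :
    oOut δ ω q (xs ++ ys) = oOut δ ω q xs ++ oOut δ ω (dAfter δ q xs) ys := by
  induction xs generalizing q with
  | nil => rfl
  | cons x xs ih => simp [oOut, dAfter, ih]

lemma oOut_length {Q I O : Type*} (δ : Q → I → Q) (ω : Q → I → O) (q : Q) (xs : List I) :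
    (oOut δ ω q xs).length = xs.length := by
  induction xs generalizing q with
  | nil => rfl
  | cons x xs ih => simp [oOut, ih]

/-- for completely specified deterministic prime machines M and S over the same
alphabets, L(S) = L(M) iff S satisfies the composite requirement
R_eq = ⋀_{(q,x)} R(q, x, {ω_M(q,x)}). Primeness is expressed by reachability of all states
and pairwise distinguishability of distinct states. -/
theorem stmt_6 {Q S I O : Type*}
    (δM : Q → I → Q) (ωM : Q → I → O) (q0 : Q)
    (δS : S → I → S) (ωS : S → I → O) (s0 : S)
    (hMreach : ∀ q : Q, ∃ π : List I, dAfter δM q0 π = q)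
    (hMdist : ∀ q q' : Q, (∀ xs : List I, oOut δM ωM q xs = oOut δM ωM q' xs) → q = q')
    (hSreach : ∀ s : S, ∃ π : List I, dAfter δS s0 π = s)
    (hSdist : ∀ s s' : S, (∀ xs : List I, oOut δS ωS s xs = oOut δS ωS s' xs) → s = s') :
    {p : List I × List O | p.2 = oOut δS ωS s0 p.1} =
      {p : List I × List O | p.2 = oOut δM ωM q0 p.1} ↔
    ∀ (q : Q) (x : I) (π : List I), dAfter δM q0 π = q →
      ωS (dAfter δS s0 π) x ∈ ({ωM q x} : Set O) := by
  constructor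
  · intro h q x π hπ
    have hmem : ((π ++ [x], oOut δS ωS s0 (π ++ [x])) : List I × List O) ∈
        {p : List I × List O | p.2 = oOut δS ωS s0 p.1} := rfl
    rw [h] at hmem
    have heq : oOut δS ωS s0 (π ++ [x]) = oOut δM ωM q0 (π ++ [x]) := hmem
    rw [oOut_append, oOut_append] at heq
    have hlen : (oOut δS ωS s0 π).length = (oOut δM ωM q0 π).length := by
      rw [oOut_length, oOut_length]
    have htail := List.append_inj_right heq hlen
    simp only [oOut, List.cons.injEq] at htail
    simp [← hπ, htail.1]
  · intro h
    have key : ∀ (π : List I) (pre : List I),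
        oOut δS ωS (dAfter δS s0 pre) π = oOut δM ωM (dAfter δM q0 pre) π := by
      intro π
      induction π with
      | nil => intro pre; rfl
      | cons x xs ih =>
        intro pre
        have h1 := h (dAfter δM q0 pre) x pre rfl
        simp only [Set.mem_singleton_iff] at h1
        have h2 := ih (pre ++ [x])
        rw [dAfter_append, dAfter_append] at h2
        simp only [oOut, dAfter] at h2 ⊢
        exact congrArg₂ List.cons h1 h2
    ext p
    have := key p.1 []
    simp only [dAfter] at this
    simp [Set.mem_setOf_eq, this]
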